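/- The limit of the discrete Bernoulli survival products converges to the exponential survival function: if λ : [t, τ] → ℝ is continuous and nonnegative, then for partitions t = t₀ < ⋯ < t_K = τ with mesh tending to 0, ∏_{k=1}^K (1 − λ(t_{k-1})(t_k − t_{k-1})) → exp(−∫_t^τ λ(s) ds). -/

import Mathlib

private lemma exp_sub_exp_le_aux {a b : ℝ} (hab : a ≤ b) (hb : b ≤ 0) :
    Real.exp b - Real.exp a ≤ b - a := by
  have h1 : Real.exp b ≤ 1 := by
    calc Real.exp b ≤ Real.exp 0 := Real.exp_le_exp.mpr hb
    _ = 1 := Real.exp_zero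
  have h2 : (a - b) + 1 ≤ Real.exp (a - b) := Real.add_one_le_exp _
  have h3 : Real.exp a = Real.exp b * Real.exp (a - b) := by
    rw [← Real.exp_add]; ring_nf
  nlinarith [Real.exp_pos b, Real.exp_pos (a - b)]

private lemma abs_exp_sub_exp_le {a b : ℝ} (ha : a ≤ 0) (hb : b ≤ 0) :
    |Real.exp a - Real.exp b| ≤ |a - b| := by
  rcases le_total a b with h | h
  · rw [abs_sub_comm, abs_of_nonneg (sub_nonneg.2 (Real.exp_le_exp.mpr h)),
      abs_sub_comm, abs_of_nonneg (sub_nonneg.2 h)]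
    exact exp_sub_exp_le_aux h hb
  · rw [abs_of_nonneg (sub_nonneg.2 (Real.exp_le_exp.mpr h)), abs_of_nonneg (sub_nonneg.2 h)]
    exact exp_sub_exp_le_aux h ha

private lemma log_one_sub_add_le {x : ℝ} (h0 : 0 ≤ x) (h1 : x ≤ 1/2) :
    |Real.log (1 - x) + x| ≤ 2 * x ^ 2 := by
  have hx : |x| < 1 := by rw [abs_of_nonneg h0]; linarith
  have := Real.abs_log_sub_add_sum_range_le hx 1
  simp only [Finset.sum_range_one, pow_one] at this
  rw [abs_of_nonneg h0] at this
  have h2 : x ^ 2 / (1 - x) ≤ 2 * x ^ 2 := by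
    rw [div_le_iff₀ (by linarith)]
    nlinarith
  calc |Real.log (1 - x) + x| = |x / 1 + Real.log (1 - x)| := by rw [abs_of_nonneg h0] at hx; rw [add_comm]; norm_num
  _ ≤ x ^ (1 + 1) / (1 - x) := by simpa using this
  _ ≤ 2 * x ^ 2 := by simpa using h2

/-- Convergence of the discrete Bernoulli survival products to the exponential survival
function: for continuous nonnegative `λ` on `[t, τ]`, over partitions
`t = t₀ < ⋯ < t_K = τ` with mesh tending to `0` (small enough that each factor is positive),
`∏_{k=1}^K (1 − λ(t_{k-1})·(t_k − t_{k-1})) → exp (−∫_t^τ λ)`. -/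
theorem bernoulli_product_tendsto_exp_survival
    (t τ : ℝ) (htτ : t < τ) (lam : ℝ → ℝ)
    (hlam : ContinuousOn lam (Set.Icc t τ))
    (hnonneg : ∀ s ∈ Set.Icc t τ, 0 ≤ lam s) :
    ∀ ε > 0, ∃ δ > 0, ∀ (K : ℕ) (p : Fin (K + 1) → ℝ),
      StrictMono p → p 0 = t → p (Fin.last K) = τ →
      (∀ k : Fin K, p k.succ - p k.castSucc < δ) →
      (∀ k : Fin K, 0 < 1 - lam (p k.castSucc) * (p k.succ - p k.castSucc)) →
      |(∏ k : Fin K, (1 - lam (p k.castSucc) * (p k.succ - p k.castSucc))) -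
        Real.exp (-∫ s in t..τ, lam s)| < ε := by
  intro ε hε
  have hlen : (0:ℝ) < τ - t := sub_pos.2 htτ
  -- bound M on lam
  obtain ⟨x₀, hx₀, hM⟩ := isCompact_Icc.exists_isMaxOn ⟨t, le_refl t, htτ.le⟩ hlam
  set M : ℝ := lam x₀ + 1 with hMdef
  have hMpos : 0 < M := by have := hnonneg x₀ hx₀; linarith
  have hMb : ∀ s ∈ Set.Icc t τ, lam s ≤ M := fun s hs => le_trans (hM hs) (by rw [hMdef]; linarith)
  -- uniform continuity
  have huc := (isCompact_Icc.uniformContinuousOn_of_continuous hlam)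
  rw [Metric.uniformContinuousOn_iff] at huc
  have hε₁ : (0:ℝ) < ε / (3 * (τ - t)) := by positivity
  obtain ⟨δ₀, hδ₀, hucd⟩ := huc _ hε₁
  refine ⟨min δ₀ (min (ε / (6 * M ^ 2 * (τ - t))) (1 / (2 * M))), by positivity, ?_⟩
  set δ := min δ₀ (min (ε / (6 * M ^ 2 * (τ - t))) (1 / (2 * M))) with hδdef
  intro K p hmono hp0 hpK hmesh hpos
  have hmem : ∀ k : Fin (K + 1), p k ∈ Set.Icc t τ := by
    intro k
    exact ⟨hp0 ▸ hmono.monotone (Fin.zero_le k), hpK ▸ hmono.monotone (Fin.le_last k)⟩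
  have hΔpos : ∀ k : Fin K, 0 < p k.succ - p k.castSucc :=
    fun k => sub_pos.2 (hmono (Fin.castSucc_lt_succ : k.castSucc < k.succ))
  set u : Fin K → ℝ := fun k => lam (p k.castSucc) * (p k.succ - p k.castSucc) with hu
  have hu0 : ∀ k, 0 ≤ u k := fun k =>
    mul_nonneg (hnonneg _ (hmem _)) (hΔpos k).le
  have huM : ∀ k, u k ≤ M * δ := fun k =>
    mul_le_mul (hMb _ (hmem _)) (hmesh k).le (hΔpos k).le hMpos.le
  have hδle : M * δ ≤ 1 / 2 := by
    have : δ ≤ 1 / (2 * M) := le_trans (min_le_right _ _) (min_le_right _ _)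
    rw [le_div_iff₀ (by positivity)] at this
    nlinarith
  have huhalf : ∀ k, u k ≤ 1 / 2 := fun k => (huM k).trans hδle
  -- the integral split
  set q : ℕ → ℝ := fun n => p ⟨min n K, Nat.lt_succ_of_le (min_le_right n K)⟩ with hq
  have hqval : ∀ k : Fin K, q k.val = p k.castSucc ∧ q (k.val + 1) = p k.succ := by
    intro k
    constructor
    · show p _ = _
      congr 1
      exact Fin.ext (by simp [Nat.min_eq_left k.isLt.le])
    · show p _ = _
      congr 1
      exact Fin.ext (by simp [Nat.min_eq_left k.isLt])
  have hq0 : q 0 = t := by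
    rw [← hp0]; show p _ = _ ; congr 1
  have hqK : q K = τ := by
    rw [← hpK]; show p _ = _ ; congr 1; exact Fin.ext (by simp [Fin.last])
  have hqmem : ∀ n, q n ∈ Set.Icc t τ := fun n => hmem _
  have hint : ∀ k < K, IntervalIntegrable lam MeasureTheory.volume (q k) (q (k+1)) := by
    intro k hk
    apply ContinuousOn.intervalIntegrable
    apply hlam.mono
    exact Set.uIcc_subset_Icc (hqmem k) (hqmem (k+1))
  have hsplit : ∫ s in t..τ, lam s =
      ∑ k ∈ Finset.range K, ∫ s in q k..q (k+1), lam s := by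
    rw [intervalIntegral.sum_integral_adjacent_intervals hint, hq0, hqK]
  -- per-interval Riemann estimate
  have hrs : ∀ k : Fin K, |u k - ∫ s in q k.val..q (k.val+1), lam s|
      ≤ ε / (3 * (τ - t)) * (p k.succ - p k.castSucc) := by
    intro k
    obtain ⟨hq1, hq2⟩ := hqval k
    have hii : IntervalIntegrable lam MeasureTheory.volume (q k.val) (q (k.val+1)) :=
      hint k.val k.isLt
    have hconst : u k = ∫ _ in q k.val..q (k.val+1), lam (p k.castSucc) := by
      rw [intervalIntegral.integral_const, hq1, hq2, smul_eq_mul, mul_comm]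
    rw [hconst, ← intervalIntegral.integral_sub intervalIntegrable_const hii]
    have := intervalIntegral.norm_integral_le_of_norm_le_const
      (f := fun s => lam (p k.castSucc) - lam s) (C := ε / (3 * (τ - t)))
      (a := q k.val) (b := q (k.val+1)) ?_
    · rw [Real.norm_eq_abs] at this
      refine this.trans ?_
      apply mul_le_mul_of_nonneg_left _ hε₁.le
      rw [hq1, hq2, abs_of_nonneg (hΔpos k).le]
    · intro x hx
      rw [Set.uIoc_of_le (by rw [hq1, hq2]; linarith [hΔpos k])] at hx
      rw [hq1, hq2] at hx
      have hxmem : x ∈ Set.Icc t τ := by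
        constructor
        · linarith [(hmem k.castSucc).1, hx.1]
        · linarith [(hmem k.succ).2, hx.2]
      have hd : dist (p k.castSucc) x < δ₀ := by
        rw [Real.dist_eq, abs_of_nonpos (by linarith [hx.1])]
        have : δ ≤ δ₀ := min_le_left _ _
        have := hmesh k
        linarith [hx.2]
      have := hucd _ (hmem k.castSucc) _ hxmem hd
      rw [Real.dist_eq] at this
      rw [Real.norm_eq_abs]
      exact this.le
  -- telescoping sum of lengths
  have htele : ∑ k : Fin K, (p k.succ - p k.castSucc) = τ - t := by
    have : ∀ k : Fin K, p k.succ - p k.castSucc = q (k.val+1) - q k.val := by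
      intro k; obtain ⟨h1, h2⟩ := hqval k; rw [h1, h2]
    rw [Finset.sum_congr rfl (fun k _ => this k),
      Fin.sum_univ_eq_sum_range (fun n => q (n+1) - q n) K, Finset.sum_range_sub, hq0, hqK]
  -- total Riemann error
  have hRie : |(∑ k : Fin K, u k) - ∫ s in t..τ, lam s| ≤ ε / 3 := by
    rw [hsplit, ← Fin.sum_univ_eq_sum_range (fun n => ∫ s in q n..q (n+1), lam s) K,
      ← Finset.sum_sub_distrib]
    calc |∑ k : Fin K, (u k - ∫ s in q k.val..q (k.val+1), lam s)|
        ≤ ∑ k : Fin K, |u k - ∫ s in q k.val..q (k.val+1), lam s| :=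
          Finset.abs_sum_le_sum_abs _ _
      _ ≤ ∑ k : Fin K, ε / (3 * (τ - t)) * (p k.succ - p k.castSucc) :=
          Finset.sum_le_sum (fun k _ => hrs k)
      _ = ε / (3 * (τ - t)) * (τ - t) := by rw [← Finset.mul_sum, htele]
      _ = ε / 3 := by field_simp
  -- log expansion error
  have hlogsum : |(∑ k : Fin K, Real.log (1 - u k)) + ∑ k : Fin K, u k| ≤ ε / 3 := by
    calc |(∑ k : Fin K, Real.log (1 - u k)) + ∑ k : Fin K, u k|
        = |∑ k : Fin K, (Real.log (1 - u k) + u k)| := by rw [Finset.sum_add_distrib]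
      _ ≤ ∑ k : Fin K, |Real.log (1 - u k) + u k| := Finset.abs_sum_le_sum_abs _ _
      _ ≤ ∑ k : Fin K, 2 * (u k) ^ 2 :=
          Finset.sum_le_sum (fun k _ => log_one_sub_add_le (hu0 k) (huhalf k))
      _ ≤ ∑ k : Fin K, 2 * (M * δ) * u k := by
          refine Finset.sum_le_sum (fun k _ => ?_)
          have := huM k; have := hu0 k
          nlinarith
      _ = 2 * (M * δ) * ∑ k : Fin K, u k := by rw [Finset.mul_sum]
      _ ≤ 2 * (M * δ) * (M * (τ - t)) := by
          apply mul_le_mul_of_nonneg_left _ (by positivity)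
          calc ∑ k : Fin K, u k ≤ ∑ k : Fin K, M * (p k.succ - p k.castSucc) :=
                Finset.sum_le_sum (fun k _ => mul_le_mul_of_nonneg_right
                  (hMb _ (hmem _)) (hΔpos k).le)
            _ = M * (τ - t) := by rw [← Finset.mul_sum, htele]
      _ ≤ ε / 3 := by
          have hδ2 : δ ≤ ε / (6 * M ^ 2 * (τ - t)) :=
            le_trans (min_le_right _ _) (min_le_left _ _)
          rw [le_div_iff₀ (by positivity)] at hδ2
          have h9 : 2 * (M * δ) * (M * (τ - t)) = (δ * (6 * M ^ 2 * (τ - t))) / 3 := by ring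
          rw [h9]
          exact (div_le_div_iff_of_pos_right (by norm_num)).mpr hδ2
  -- assemble
  set L : ℝ := ∑ k : Fin K, Real.log (1 - u k) with hL
  set I : ℝ := ∫ s in t..τ, lam s with hI
  have hprod : ∏ k : Fin K, (1 - u k) = Real.exp L := by
    rw [hL, Real.exp_sum]
    exact Finset.prod_congr rfl fun k _ => (Real.exp_log (hpos k)).symm
  have hLI : |L - (-I)| ≤ 2 * ε / 3 := by
    have : L - (-I) = (L + ∑ k : Fin K, u k) + (I - ∑ k : Fin K, u k) := by ring
    rw [this]
    calc |(L + ∑ k : Fin K, u k) + (I - ∑ k : Fin K, u k)|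
        ≤ |L + ∑ k : Fin K, u k| + |I - ∑ k : Fin K, u k| := abs_add_le _ _
      _ ≤ ε / 3 + ε / 3 := by
          refine add_le_add hlogsum ?_
          rw [abs_sub_comm]; exact hRie
      _ = 2 * ε / 3 := by ring
  have hL0 : L ≤ 0 := by
    apply Finset.sum_nonpos
    intro k _
    apply Real.log_nonpos
    · show (0:ℝ) ≤ 1 - lam (p k.castSucc) * (p k.succ - p k.castSucc)
      linarith [hpos k]
    · linarith [hu0 k]
  have hI0 : -I ≤ 0 := by
    rw [neg_nonpos, hI]
    exact intervalIntegral.integral_nonneg htτ.le (fun s hs => hnonneg s hs)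
  calc |(∏ k : Fin K, (1 - u k)) - Real.exp (-I)| = |Real.exp L - Real.exp (-I)| := by
        rw [hprod]
    _ ≤ |L - (-I)| := abs_exp_sub_exp_le hL0 hI0
    _ ≤ 2 * ε / 3 := hLI
    _ < ε := by linarith
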